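/- Let (Š_n) be the shaved walk associated with the animal walk (S_n). For any integers x_0, x_1, …, x_n with x_0 = 0, x_{i+1} − x_i ∈ ℤ_{<0} ∪ {1} for all i < n, and x_{i+1} ≥ (min_{j≤i} x_j) − 1 for all i < n, one has P(Š_0 = x_0, Š_1 = x_1, …, Š_n = x_n) = 2^{x_n − min_{i≤n} x_i} / 3^n. -/

import Mathlib

open MeasureTheory

/-- The animal walk: S 0 = 0 and S n = ξ 0 + … + ξ (n-1). -/
def walk {Ω : Type*} (ξ : ℕ → Ω → ℤ) (n : ℕ) (ω : Ω) : ℤ :=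
  ∑ i ∈ Finset.range n, ξ i ω

/-- The step distribution μ of the animal walk, evaluated on the singleton {z}:
μ({1}) = 2/3, μ({−k}) = 2^{−k}/3 for k ≥ 1, and 0 otherwise. -/
noncomputable def animalStepLaw (z : ℤ) : ENNReal :=
  if z = 1 then 2/3 else if z < 0 then (2 : ENNReal) ^ z / 3 else 0

/-- Auxiliary: the pair (Š n, min_{i≤n} Š i) of the shaved walk associated with a
path S, defined by Š 0 = 0 and
Š_{n+1} = Š_n + (S_{n+1} − S_n) if S_{n+1} ≥ min_{i≤n} S_i, and
Š_{n+1} = (min_{i≤n} Š_i) − 1 if S_{n+1} < min_{i≤n} S_i. -/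
def shavedAux (S : ℕ → ℤ) : ℕ → ℤ × ℤ
  | 0 => (0, 0)
  | n+1 =>
    let p := shavedAux S n
    let v := if (Finset.range (n+1)).inf' Finset.nonempty_range_add_one S ≤ S (n+1)
             then p.1 + (S (n+1) - S n)
             else p.2 - 1
    (v, min p.2 v)

/-- The shaved walk Š associated with a path S. -/
def shaved (S : ℕ → ℤ) (n : ℕ) : ℤ := (shavedAux S n).1

lemma ennreal_arith (a b : ℤ) (n : ℕ) :
    (2:ENNReal)^a/3^n * ((2:ENNReal)^b/3) = 2^(a+b)/3^(n+1) := by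
  rw [div_eq_mul_inv, div_eq_mul_inv, div_eq_mul_inv,
    ENNReal.zpow_add (by norm_num) (by norm_num), pow_succ,
    ENNReal.mul_inv (by simp) (by simp)]
  ring

lemma law_single {Ω : Type*} [MeasurableSpace Ω] (P : Measure Ω)
    (ξi : Ω → ℤ) (hl : ∀ z, P {ω | ξi ω = z} = animalStepLaw z)
    (d : ℤ) (hd : d < 0 ∨ d = 1) :
    P {ω | ξi ω = d} = (2:ENNReal)^d / 3 := by
  rw [hl d]
  rcases hd with hd | hd
  · rw [animalStepLaw, if_neg (by omega), if_pos hd]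
  · subst hd; simp [animalStepLaw]

lemma law_lt {Ω : Type*} [MeasurableSpace Ω] (P : Measure Ω)
    (ξi : Ω → ℤ) (hm : Measurable ξi)
    (hl : ∀ z, P {ω | ξi ω = z} = animalStepLaw z)
    (c : ℤ) (hc : c ≤ 0) :
    P {ω | ξi ω < c} = (2:ENNReal)^c / 3 := by
  have hset : {ω | ξi ω < c} = ⋃ k : ℕ, {ω | ξi ω = c - 1 - k} := by
    ext ω
    simp only [Set.mem_setOf_eq, Set.mem_iUnion]
    constructor
    · intro h; exact ⟨(c - 1 - ξi ω).toNat, by omega⟩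
    · rintro ⟨k, hk⟩; omega
  rw [hset, measure_iUnion]
  · have hterm : ∀ k : ℕ, P {ω | ξi ω = c - 1 - k}
        = (2:ENNReal)^(c-1) * 3⁻¹ * (2⁻¹)^k := by
      intro k
      rw [hl, animalStepLaw, if_neg (by omega), if_pos (by omega),
        show c - 1 - (k:ℤ) = (c-1) + (-(k:ℤ)) by ring,
        ENNReal.zpow_add (by norm_num) (by norm_num),
        ENNReal.zpow_neg 2 (k:ℤ), zpow_natCast,
        div_eq_mul_inv, ← ENNReal.inv_pow]
      ring
    rw [tsum_congr hterm, ENNReal.tsum_mul_left, ENNReal.tsum_geometric,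
      ENNReal.one_sub_inv_two, inv_inv,
      show (2:ENNReal)^(c-1) * 3⁻¹ * 2 = (2^(c-1) * 2^(1:ℤ)) * 3⁻¹ by rw [zpow_one]; ring,
      ← ENNReal.zpow_add (by norm_num) (by norm_num), div_eq_mul_inv]
    norm_num
  · intro k l hkl
    simp only [Function.onFun, Set.disjoint_left, Set.mem_setOf_eq]
    intro ω h1 h2
    omega
  · intro k
    exact hm (measurableSet_singleton _)

lemma shavedAux_succ_fst (S : ℕ → ℤ) (n : ℕ) :
    (shavedAux S (n+1)).1 =
      if (Finset.range (n+1)).inf' Finset.nonempty_range_add_one S ≤ S (n+1)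
      then (shavedAux S n).1 + (S (n+1) - S n)
      else (shavedAux S n).2 - 1 := rfl

lemma shavedAux_succ_snd (S : ℕ → ℤ) (n : ℕ) :
    (shavedAux S (n+1)).2 = min (shavedAux S n).2 ((shavedAux S (n+1)).1) := rfl

lemma inf_le_self_range (f : ℕ → ℤ) (n : ℕ) :
    (Finset.range (n+1)).inf' Finset.nonempty_range_add_one f ≤ f n :=
  Finset.inf'_le f (Finset.self_mem_range_succ n)

lemma inf_range_succ (f : ℕ → ℤ) (n : ℕ) :
    (Finset.range (n+2)).inf' Finset.nonempty_range_add_one f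
      = min ((Finset.range (n+1)).inf' Finset.nonempty_range_add_one f) (f (n+1)) := by
  apply le_antisymm
  · apply le_min
    · exact Finset.inf'_mono f (Finset.range_subset_range.2 (by omega)) _
    · exact Finset.inf'_le f (Finset.self_mem_range_succ (n+1))
  · apply Finset.le_inf'
    intro b hb
    rcases Finset.mem_range.1 hb with h
    by_cases hbn : b = n + 1
    · subst hbn; exact min_le_right _ _
    · exact le_trans (min_le_left _ _) (Finset.inf'_le f (Finset.mem_range.2 (by omega)))

lemma shavedAux_snd (S : ℕ → ℤ) (n : ℕ) :
    (shavedAux S n).2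
      = (Finset.range (n+1)).inf' Finset.nonempty_range_add_one (shaved S) := by
  induction n with
  | zero => simp [shavedAux, shaved]
  | succ n ih =>
    rw [inf_range_succ, ← ih, shavedAux_succ_snd]
    rfl

lemma shaved_invariant (S : ℕ → ℤ) (n : ℕ) :
    S n - (Finset.range (n+1)).inf' Finset.nonempty_range_add_one S
      = shaved S n - (Finset.range (n+1)).inf' Finset.nonempty_range_add_one (shaved S) := by
  induction n with
  | zero => simp [shaved, shavedAux]
  | succ n ih =>
    by_cases h : (Finset.range (n+1)).inf' Finset.nonempty_range_add_one S ≤ S (n+1)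
    · have hv : shaved S (n+1) = shaved S n + (S (n+1) - S n) := by
        rw [shaved, shavedAux_succ_fst, if_pos h]; rfl
      have hls := inf_le_self_range (shaved S) n
      rw [inf_range_succ, inf_range_succ, hv]
      omega
    · push_neg at h
      have hv : shaved S (n+1)
          = (Finset.range (n+1)).inf' Finset.nonempty_range_add_one (shaved S) - 1 := by
        rw [shaved, shavedAux_succ_fst, if_neg (not_le.2 h), shavedAux_snd]
      rw [inf_range_succ, inf_range_succ, hv]
      omega

lemma shavedAux_congr (S S' : ℕ → ℤ) (n : ℕ) (h : ∀ i ≤ n, S i = S' i) :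
    shavedAux S n = shavedAux S' n := by
  induction n with
  | zero => rfl
  | succ n ih =>
    have ih' := ih (fun i hi => h i (by omega))
    have hinf : (Finset.range (n+1)).inf' Finset.nonempty_range_add_one S
        = (Finset.range (n+1)).inf' Finset.nonempty_range_add_one S' :=
      Finset.inf'_congr Finset.nonempty_range_add_one rfl
        (fun i hi => h i (by simp at hi; omega))
    have h1 := h n (by omega)
    have h2 := h (n+1) le_rfl
    have hfst : (shavedAux S (n+1)).1 = (shavedAux S' (n+1)).1 := by
      rw [shavedAux_succ_fst, shavedAux_succ_fst, hinf, h2, h1, ih']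
    have hsnd : (shavedAux S (n+1)).2 = (shavedAux S' (n+1)).2 := by
      rw [shavedAux_succ_snd, shavedAux_succ_snd, ih', hfst]
    exact Prod.ext_iff.2 ⟨hfst, hsnd⟩

lemma shaved_succ_eq (S x : ℕ → ℤ) (n : ℕ) (hx : ∀ i ≤ n, shaved S i = x i) :
    shaved S (n+1) =
      if (Finset.range (n+1)).inf' Finset.nonempty_range_add_one x - x n ≤ S (n+1) - S n
      then x n + (S (n+1) - S n)
      else (Finset.range (n+1)).inf' Finset.nonempty_range_add_one x - 1 := by
  have hinf : (Finset.range (n+1)).inf' Finset.nonempty_range_add_one (shaved S)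
      = (Finset.range (n+1)).inf' Finset.nonempty_range_add_one x :=
    Finset.inf'_congr Finset.nonempty_range_add_one rfl
      (fun i hi => hx i (by simp at hi; omega))
  have hinv := shaved_invariant S n
  rw [hx n le_rfl, hinf] at hinv
  have hc : ((Finset.range (n+1)).inf' Finset.nonempty_range_add_one S ≤ S (n+1))
      = ((Finset.range (n+1)).inf' Finset.nonempty_range_add_one x - x n ≤ S (n+1) - S n) := by
    rw [eq_iff_iff]; omega
  rw [shaved, shavedAux_succ_fst, shavedAux_snd, hinf]
  simp only [hc]
  rw [show (shavedAux S n).1 = x n from hx n le_rfl]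

def extFun (n : ℕ) (y : ↥(Finset.range n) → ℤ) (j : ℕ) : ℤ :=
  if h : j ∈ Finset.range n then y ⟨j, h⟩ else 0

lemma indep_step {Ω : Type*} [MeasurableSpace Ω] (P : Measure Ω) (ξ : ℕ → Ω → ℤ)
    (hmeas : ∀ i, Measurable (ξ i))
    (hindep : ProbabilityTheory.iIndepFun ξ P)
    (n : ℕ) (x : ℕ → ℤ) (A : Set ℤ) :
    P ({ω | ∀ i ≤ n, shaved (fun m => walk ξ m ω) i = x i} ∩ {ω | ξ n ω ∈ A})
      = P {ω | ∀ i ≤ n, shaved (fun m => walk ξ m ω) i = x i} * P {ω | ξ n ω ∈ A} := by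
  have hI := hindep.indepFun_finset (Finset.range n) {n} (by simp) hmeas
  set B₁ : Set (↥(Finset.range n) → ℤ) :=
    {y | ∀ i ≤ n, shaved (fun m => ∑ j ∈ Finset.range m, extFun n y j) i = x i} with hB₁
  set B₂ : Set (↥({n} : Finset ℕ) → ℤ) :=
    {y | y ⟨n, Finset.mem_singleton_self n⟩ ∈ A} with hB₂
  have h1 : {ω | ∀ i ≤ n, shaved (fun m => walk ξ m ω) i = x i}
      = (fun ω (i : ↥(Finset.range n)) => ξ i ω) ⁻¹' B₁ := by
    ext ω
    simp only [Set.mem_setOf_eq, Set.mem_preimage, hB₁]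
    have hw : ∀ i ≤ n, shaved (fun m => walk ξ m ω) i
        = shaved (fun m => ∑ j ∈ Finset.range m,
            extFun n (fun i : ↥(Finset.range n) => ξ i ω) j) i := by
      intro i hi
      refine congrArg Prod.fst (shavedAux_congr _ _ i (fun m hm => ?_))
      unfold walk extFun
      refine Finset.sum_congr rfl (fun j hj => ?_)
      rw [dif_pos (by simp at hj ⊢; omega)]
    constructor
    · intro h i hi; rw [← hw i hi]; exact h i hi
    · intro h i hi; rw [hw i hi]; exact h i hi
  have h2 : {ω | ξ n ω ∈ A} = (fun ω (i : ↥({n} : Finset ℕ)) => ξ i ω) ⁻¹' B₂ := rfl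
  rw [h1, h2]
  exact hI.measure_inter_preimage_eq_mul _ _
    ((Set.to_countable B₁).measurableSet) ((Set.to_countable B₂).measurableSet)


/-- For any integers x₀, …, xₙ with x₀ = 0, increments in
ℤ_{<0} ∪ {1}, and x_{i+1} ≥ (min_{j≤i} x_j) − 1 for all i < n, the shaved walk
follows this path with probability 2^{xₙ − min_{i≤n} x_i} / 3ⁿ. -/
theorem shaved_walk_path_probability
    {Ω : Type*} [MeasurableSpace Ω] (P : Measure Ω) [IsProbabilityMeasure P]
    (ξ : ℕ → Ω → ℤ) (hmeas : ∀ i, Measurable (ξ i))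
    (hindep : ProbabilityTheory.iIndepFun ξ P)
    (hlaw : ∀ i, ∀ z : ℤ, P {ω | ξ i ω = z} = animalStepLaw z)
    (n : ℕ) (x : ℕ → ℤ) (h0 : x 0 = 0)
    (hstep : ∀ i < n, x (i+1) - x i < 0 ∨ x (i+1) - x i = 1)
    (hshave : ∀ i < n,
      (Finset.range (i+1)).inf' Finset.nonempty_range_add_one x - 1 ≤ x (i+1)) :
    P {ω | ∀ i ≤ n, shaved (fun m => walk ξ m ω) i = x i} =
      (2 : ENNReal) ^ (x n - (Finset.range (n+1)).inf' Finset.nonempty_range_add_one x)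
        / 3 ^ n := by
  induction n with
  | zero =>
    have hU : {ω : Ω | ∀ i ≤ 0, shaved (fun m => walk ξ m ω) i = x i} = Set.univ := by
      ext ω
      simp only [Set.mem_setOf_eq, Set.mem_univ, iff_true]
      intro i hi
      obtain rfl := Nat.le_zero.1 hi
      rw [h0]; rfl
    rw [hU, measure_univ]
    have : (Finset.range 1).inf' Finset.nonempty_range_add_one x = x 0 := by
      simp [Finset.range_one]
    rw [this]
    simp
  | succ n ih =>
    have ih' := ih (fun i hi => hstep i (by omega)) (fun i hi => hshave i (by omega))
    have hsub : ∀ ω : Ω, walk ξ (n+1) ω - walk ξ n ω = ξ n ω := by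
      intro ω; rw [walk, walk, Finset.sum_range_succ]; ring
    have hMxn : (Finset.range (n+1)).inf' Finset.nonempty_range_add_one x ≤ x n :=
      inf_le_self_range x n
    have hsucc : (Finset.range (n+1+1)).inf' Finset.nonempty_range_add_one x
        = min ((Finset.range (n+1)).inf' Finset.nonempty_range_add_one x) (x (n+1)) :=
      inf_range_succ x n
    by_cases hc : (Finset.range (n+1)).inf' Finset.nonempty_range_add_one x ≤ x (n+1)
    · have hE : {ω : Ω | ∀ i ≤ n+1, shaved (fun m => walk ξ m ω) i = x i}
          = {ω | ∀ i ≤ n, shaved (fun m => walk ξ m ω) i = x i}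
            ∩ {ω | ξ n ω ∈ ({x (n+1) - x n} : Set ℤ)} := by
        ext ω
        simp only [Set.mem_setOf_eq, Set.mem_inter_iff, Set.mem_singleton_iff]
        constructor
        · intro h
          have hpre : ∀ i ≤ n, shaved (fun m => walk ξ m ω) i = x i :=
            fun i hi => h i (by omega)
          refine ⟨hpre, ?_⟩
          have heq := shaved_succ_eq (fun m => walk ξ m ω) x n hpre
          rw [hsub ω] at heq
          have hl := h (n+1) le_rfl
          rw [heq] at hl
          split_ifs at hl with h' <;> omega
        · rintro ⟨hpre, hs⟩ i hi
          have heq := shaved_succ_eq (fun m => walk ξ m ω) x n hpre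
          rw [hsub ω] at heq
          rcases Nat.lt_or_ge i (n+1) with h' | h'
          · exact hpre i (by omega)
          · have hieq : i = n+1 := by omega
            subst hieq
            rw [heq, if_pos (by omega)]
            omega
      rw [hE, indep_step P ξ hmeas hindep n x _, ih',
        show {ω | ξ n ω ∈ ({x (n+1) - x n} : Set ℤ)} = {ω | ξ n ω = x (n+1) - x n} from rfl,
        law_single P (ξ n) (fun z => hlaw n z) _ (hstep n (by omega)),
        ennreal_arith, hsucc, min_eq_left hc]
      congr 1
      ring
    · push_neg at hc
      have hx1 : x (n+1) = (Finset.range (n+1)).inf' Finset.nonempty_range_add_one x - 1 := by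
        have := hshave n (by omega); omega
      have hE : {ω : Ω | ∀ i ≤ n+1, shaved (fun m => walk ξ m ω) i = x i}
          = {ω | ∀ i ≤ n, shaved (fun m => walk ξ m ω) i = x i}
            ∩ {ω | ξ n ω ∈ Set.Iio
                ((Finset.range (n+1)).inf' Finset.nonempty_range_add_one x - x n)} := by
        ext ω
        simp only [Set.mem_setOf_eq, Set.mem_inter_iff, Set.mem_Iio]
        constructor
        · intro h
          have hpre : ∀ i ≤ n, shaved (fun m => walk ξ m ω) i = x i :=
            fun i hi => h i (by omega)
          refine ⟨hpre, ?_⟩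
          have heq := shaved_succ_eq (fun m => walk ξ m ω) x n hpre
          rw [hsub ω] at heq
          have hl := h (n+1) le_rfl
          rw [heq] at hl
          split_ifs at hl with h' <;> omega
        · rintro ⟨hpre, hs⟩ i hi
          have heq := shaved_succ_eq (fun m => walk ξ m ω) x n hpre
          rw [hsub ω] at heq
          rcases Nat.lt_or_ge i (n+1) with h' | h'
          · exact hpre i (by omega)
          · have hieq : i = n+1 := by omega
            subst hieq
            rw [heq, if_neg (by omega)]
            omega
      rw [hE, indep_step P ξ hmeas hindep n x _,
        show {ω | ξ n ω ∈ Set.Iio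
            ((Finset.range (n+1)).inf' Finset.nonempty_range_add_one x - x n)}
          = {ω | ξ n ω < (Finset.range (n+1)).inf' Finset.nonempty_range_add_one x - x n}
          from rfl,
        ih', law_lt P (ξ n) (hmeas n) (fun z => hlaw n z) _ (by omega),
        ennreal_arith, hsucc, min_eq_right (by omega)]
      rw [show x n - (Finset.range (n+1)).inf' Finset.nonempty_range_add_one x +
        ((Finset.range (n+1)).inf' Finset.nonempty_range_add_one x - x n)
        = x (n+1) - x (n+1) by ring]
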